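/- Let 1 < q < ∞, b > 0, and m be chosen so that q(n-m) + qb/2 + 1 < 0. Then for any nonnegative sequence (c_j)_{j∈ℤ}, ∫_0^∞ ( ∑_{j : 2^{2j} ≥ 1/t} 2^{(2n-2m)j} t^{n-m} c_j )^q dt ≤ C ∑_{j∈ℤ} 2^{-2j} c_j^q, with C depending only on n, m, b, q. -/

import Mathlib

open MeasureTheory Real Set ENNReal

/-- Hölder inequality for tsums over ℤ, raised to the power q. -/
lemma tsum_holder_pow {q : ℝ} (hq : 1 < q) (f g : ℤ → ℝ≥0∞) :
    (∑' j : ℤ, f j * g j) ^ q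
      ≤ (∑' j : ℤ, f j ^ (q / (q - 1))) ^ (q - 1) * ∑' j : ℤ, g j ^ q := by
  set r := q / (q - 1) with hr_def
  have hqr : (r : ℝ).HolderConjugate q :=
    (Real.HolderConjugate.conjExponent hq).symm
  have hf : AEMeasurable f (Measure.count : Measure ℤ) :=
    (measurable_of_countable f).aemeasurable
  have hg : AEMeasurable g (Measure.count : Measure ℤ) :=
    (measurable_of_countable g).aemeasurable
  have h := ENNReal.lintegral_mul_le_Lp_mul_Lq (Measure.count : Measure ℤ) hqr hf hg
  simp only [Pi.mul_apply, lintegral_count] at h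
  have hq0 : (0:ℝ) ≤ q := by linarith
  have key := ENNReal.rpow_le_rpow h hq0
  rw [ENNReal.mul_rpow_of_nonneg _ _ hq0, ← ENNReal.rpow_mul, ← ENNReal.rpow_mul] at key
  have h1 : 1 / r * q = q - 1 := by
    rw [hr_def]; field_simp
  have h2 : 1 / q * q = 1 := by field_simp
  rwa [h1, h2, ENNReal.rpow_one] at key

/-- Geometric bound on high-frequency dyadic weights. -/
lemma geom_bound {β t : ℝ} (hβ : 0 < β) (ht : 0 < t) :
    (∑' j : ℤ, if 1 / t ≤ (2 : ℝ) ^ (2 * j)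
        then ENNReal.ofReal ((2 : ℝ) ^ (-(β * (j : ℝ))) * t ^ (-(β / 2))) else 0)
      ≤ (1 - ENNReal.ofReal ((2 : ℝ) ^ (-β)))⁻¹ := by
  set j₀ : ℤ := ⌈(-Real.logb 2 t) / 2⌉ with hj₀
  have hbase : (1:ℝ) < 2 := one_lt_two
  have ht2 : (2:ℝ) ^ (-(2 * (j₀ : ℝ))) ≤ t := by
    have h1 : (-Real.logb 2 t) / 2 ≤ (j₀ : ℝ) := Int.le_ceil _
    have h2 : -(2 * (j₀ : ℝ)) ≤ Real.logb 2 t := by linarith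
    calc (2:ℝ) ^ (-(2 * (j₀ : ℝ))) ≤ (2:ℝ) ^ Real.logb 2 t :=
          Real.rpow_le_rpow_of_exponent_le (le_of_lt hbase) h2
      _ = t := Real.rpow_logb two_pos (by norm_num) ht
  set g : ℤ → ℝ≥0∞ := fun j => if j₀ ≤ j then
      ENNReal.ofReal ((2:ℝ) ^ (-β)) ^ (j - j₀).toNat else 0 with hg
  have hterm : ∀ j : ℤ,
      (if 1 / t ≤ (2 : ℝ) ^ (2 * j)
        then ENNReal.ofReal ((2 : ℝ) ^ (-(β * (j : ℝ))) * t ^ (-(β / 2))) else 0) ≤ g j := by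
    intro j
    by_cases hcond : 1 / t ≤ (2 : ℝ) ^ (2 * j)
    · have hz : (0:ℝ) < (2 : ℝ) ^ (2 * j) := zpow_pos two_pos _
      have h2t : (2:ℝ) ^ (-(2 * (j:ℝ))) ≤ t := by
        have h := (one_div_le ht hz).mp hcond
        calc (2:ℝ) ^ (-(2 * (j:ℝ))) = 1 / (2:ℝ) ^ ((2 * j : ℤ) : ℝ) := by
              rw [Real.rpow_neg (by norm_num), one_div]; push_cast; ring_nf
          _ = 1 / (2:ℝ) ^ (2 * j) := by rw [Real.rpow_intCast]
          _ ≤ t := h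
      have hj : j₀ ≤ j := by
        have hlog : -(2 * (j:ℝ)) ≤ Real.logb 2 t := by
          have h := Real.logb_le_logb_of_le hbase
            (Real.rpow_pos_of_pos two_pos _) h2t
          rwa [Real.logb_rpow two_pos (by norm_num)] at h
        refine Int.ceil_le.mpr ?_
        push_cast
        linarith
      rw [hg]; simp only
      rw [if_pos hcond, if_pos hj]
      have hkey : (2:ℝ) ^ (-(β * (j:ℝ))) * t ^ (-(β / 2))
          ≤ (2:ℝ) ^ (-β * (((j - j₀).toNat : ℕ) : ℝ)) := by
        have htj : (2:ℝ) ^ (-(β * (j₀:ℝ))) ≤ t ^ (β / 2) := by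
          have h := Real.rpow_le_rpow (Real.rpow_nonneg (by norm_num) _) ht2
            (le_of_lt (by positivity : (0:ℝ) < β / 2))
          rw [← Real.rpow_mul (by norm_num)] at h
          have he : -(2 * (j₀:ℝ)) * (β / 2) = -(β * (j₀:ℝ)) := by ring
          rwa [he] at h
        have htinv : t ^ (-(β / 2)) ≤ (2:ℝ) ^ (β * (j₀:ℝ)) := by
          have h1 : (0:ℝ) < (2:ℝ) ^ (-(β * (j₀:ℝ))) := Real.rpow_pos_of_pos two_pos _
          have h2 := inv_anti₀ h1 htj
          rw [Real.rpow_neg ht.le]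
          calc (t ^ (β / 2))⁻¹ ≤ ((2:ℝ) ^ (-(β * (j₀:ℝ))))⁻¹ := h2
            _ = (2:ℝ) ^ (β * (j₀:ℝ)) := by
                rw [← Real.rpow_neg (by norm_num)]; ring_nf
        have h0 : ((j - j₀).toNat : ℤ) = j - j₀ := Int.toNat_of_nonneg (by omega)
        have hcast : (((j - j₀).toNat : ℕ) : ℝ) = (j:ℝ) - (j₀:ℝ) := by
          rw [show (((j - j₀).toNat : ℕ) : ℝ) = (((j - j₀).toNat : ℤ) : ℝ) by push_cast; ring, h0]
          push_cast; ring
        rw [hcast]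
        calc (2:ℝ) ^ (-(β * (j:ℝ))) * t ^ (-(β / 2))
            ≤ (2:ℝ) ^ (-(β * (j:ℝ))) * (2:ℝ) ^ (β * (j₀:ℝ)) :=
              mul_le_mul_of_nonneg_left htinv (Real.rpow_nonneg (by norm_num) _)
          _ = (2:ℝ) ^ (-β * ((j:ℝ) - (j₀:ℝ))) := by
              rw [← Real.rpow_add two_pos]; ring_nf
      calc ENNReal.ofReal ((2:ℝ) ^ (-(β * (j:ℝ))) * t ^ (-(β / 2)))
          ≤ ENNReal.ofReal ((2:ℝ) ^ (-β * (((j - j₀).toNat : ℕ) : ℝ))) :=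
            ENNReal.ofReal_le_ofReal hkey
        _ = ENNReal.ofReal ((2:ℝ) ^ (-β)) ^ (j - j₀).toNat := by
            rw [Real.rpow_mul (by norm_num), Real.rpow_natCast,
              ENNReal.ofReal_pow (Real.rpow_nonneg (by norm_num) _)]
    · rw [if_neg hcond]; exact zero_le
  refine le_trans (ENNReal.tsum_le_tsum hterm) ?_
  have hinj : Function.Injective (fun k : ℕ => j₀ + (k:ℤ)) := by
    intro a b h; simpa using h
  have hsupp : Function.support g ⊆ Set.range (fun k : ℕ => j₀ + (k:ℤ)) := by
    intro j hj
    rcases le_or_gt j₀ j with h | h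
    · exact ⟨(j - j₀).toNat, by simp; omega⟩
    · exfalso; apply hj; rw [hg]; simp only; rw [if_neg (not_le.mpr h)]
  rw [← Function.Injective.tsum_eq hinj hsupp]
  have he : ∀ k : ℕ, g (j₀ + (k:ℤ)) = ENNReal.ofReal ((2:ℝ) ^ (-β)) ^ k := by
    intro k; rw [hg]; simp only; rw [if_pos (by omega)]; congr 1; omega
  rw [tsum_congr he, ENNReal.tsum_geometric]

lemma lint_tail {p A : ℝ} (hp : p < -1) (hA : 0 < A) :
    (∫⁻ t in Set.Ioi (0:ℝ), if 1/t ≤ A then ENNReal.ofReal (t^p) else 0)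
      = ENNReal.ofReal (-(A⁻¹)^(p+1)/(p+1)) := by
  have hA' : (0:ℝ) < A⁻¹ := inv_pos.mpr hA
  set S : Set ℝ := {t : ℝ | 1/t ≤ A} with hS_def
  have hS : MeasurableSet S := measurableSet_le (measurable_one.div measurable_id) measurable_const
  have h1 : (fun t : ℝ => if 1/t ≤ A then ENNReal.ofReal (t^p) else 0)
      = S.indicator (fun t => ENNReal.ofReal (t^p)) := by
    ext t; rw [Set.indicator_apply]; rfl
  rw [h1, lintegral_indicator hS, Measure.restrict_restrict hS]
  have h2 : S ∩ Set.Ioi (0:ℝ) = Set.Ici A⁻¹ := by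
    ext t
    simp only [hS_def, Set.mem_inter_iff, Set.mem_setOf_eq, Set.mem_Ioi, Set.mem_Ici]
    constructor
    · rintro ⟨h, ht⟩
      have := (one_div_le ht hA).mp h
      rwa [one_div] at this
    · intro h
      have ht : 0 < t := lt_of_lt_of_le hA' h
      exact ⟨(one_div_le ht hA).mpr (by rwa [one_div]), ht⟩
  rw [h2, Measure.restrict_congr_set Ioi_ae_eq_Ici.symm]
  have hInt : IntegrableOn (fun t : ℝ => t ^ p) (Set.Ioi A⁻¹) :=
    integrableOn_Ioi_rpow_of_lt hp hA'
  have hnn : 0 ≤ᵐ[volume.restrict (Set.Ioi A⁻¹)] (fun t : ℝ => t ^ p) :=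
    (ae_restrict_iff' measurableSet_Ioi).mpr (ae_of_all _ fun t ht =>
      Real.rpow_nonneg (le_of_lt (lt_trans hA' ht)) p)
  rw [← ofReal_integral_eq_lintegral_ofReal hInt hnn,
    integral_Ioi_rpow_of_lt hp hA']

/-- High-frequency dyadic summation estimate:
`∫_0^∞ (∑_{2^{2j} ≥ 1/t} 2^{(2n-2m)j} t^{n-m} c_j)^q dt ≤ C ∑_j 2^{-2j} c_j^q`
provided `q(n-m) + qb/2 + 1 < 0` for some `b > 0`. -/
theorem dyadic_high_frequency_estimate (n : ℕ) (q b m : ℝ) (hq : 1 < q) (hb : 0 < b)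
    (hm : q * ((n : ℝ) - m) + q * b / 2 + 1 < 0) :
    ∃ C : ℝ≥0∞, C ≠ ⊤ ∧ ∀ c : ℤ → ℝ≥0∞,
      (∫⁻ t in Set.Ioi (0 : ℝ),
          (∑' j : ℤ, if 1 / t ≤ (2 : ℝ) ^ (2 * j)
              then ENNReal.ofReal ((2 : ℝ) ^ ((2 * (n : ℝ) - 2 * m) * (j : ℝ))
                  * t ^ ((n : ℝ) - m)) * c j
              else 0) ^ q)
        ≤ C * ∑' j : ℤ, ENNReal.ofReal ((2 : ℝ) ^ (-2 * j : ℤ)) * c j ^ q := by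
  have hσ : True := trivial
  set σ : ℝ := (n : ℝ) - m with hσ_def
  have hq0 : (0:ℝ) < q := by linarith
  have hq1 : (0:ℝ) ≤ q - 1 := by linarith
  have hr : (0:ℝ) < q / (q - 1) := div_pos hq0 (by linarith)
  set β : ℝ := b * (q / (q - 1)) with hβ_def
  have hβ : (0:ℝ) < β := mul_pos hb hr
  set p : ℝ := q * σ + q * b / 2 with hp_def
  have hp : p < -1 := by linarith
  have hp1 : p + 1 < 0 := by linarith
  set A : ℝ≥0∞ := (1 - ENNReal.ofReal ((2:ℝ) ^ (-β)))⁻¹ with hA_def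
  have hA_ne_top : A ≠ ⊤ := by
    rw [hA_def, ENNReal.inv_ne_top]
    have h1 : ENNReal.ofReal ((2:ℝ) ^ (-β)) < 1 := by
      rw [← ENNReal.ofReal_one]
      exact ENNReal.ofReal_lt_ofReal_iff (by norm_num) |>.mpr
        (Real.rpow_lt_one_of_one_lt_of_neg one_lt_two (by linarith))
    exact ne_of_gt (tsub_pos_of_lt h1)
  have hD_nonneg : (0:ℝ) < -1 / (p + 1) := div_pos_of_neg_of_neg (by norm_num) hp1
  set D : ℝ≥0∞ := ENNReal.ofReal (-1 / (p + 1)) with hD_def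
  refine ⟨A ^ (q - 1) * D, ?_, ?_⟩
  · exact ENNReal.mul_ne_top (ENNReal.rpow_ne_top_of_nonneg hq1 hA_ne_top) ENNReal.ofReal_ne_top
  intro c
  -- the auxiliary integrand
  set U : ℤ → ℝ → ℝ≥0∞ := fun j t =>
    (if 1 / t ≤ (2 : ℝ) ^ (2 * j)
      then ENNReal.ofReal ((2:ℝ) ^ ((2*σ + b) * q * (j:ℝ)) * t ^ p) else 0) * c j ^ q
    with hU_def
  -- pointwise Hölder bound
  have hpoint : ∀ t ∈ Set.Ioi (0:ℝ),
      (∑' j : ℤ, if 1 / t ≤ (2 : ℝ) ^ (2 * j)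
          then ENNReal.ofReal ((2 : ℝ) ^ ((2 * (n : ℝ) - 2 * m) * (j : ℝ))
              * t ^ ((n : ℝ) - m)) * c j
          else 0) ^ q
      ≤ A ^ (q - 1) * ∑' j : ℤ, U j t := by
    intro t ht
    rw [Set.mem_Ioi] at ht
    set f : ℤ → ℝ≥0∞ := fun j => if 1 / t ≤ (2 : ℝ) ^ (2 * j)
        then ENNReal.ofReal ((2:ℝ) ^ (-(b * (j:ℝ))) * t ^ (-(b/2))) else 0 with hf_def
    set g : ℤ → ℝ≥0∞ := fun j => if 1 / t ≤ (2 : ℝ) ^ (2 * j)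
        then ENNReal.ofReal ((2:ℝ) ^ ((2*σ + b) * (j:ℝ)) * t ^ (σ + b/2)) * c j else 0
      with hg_def
    have hfg : ∀ j : ℤ,
        (if 1 / t ≤ (2 : ℝ) ^ (2 * j)
          then ENNReal.ofReal ((2 : ℝ) ^ ((2 * (n : ℝ) - 2 * m) * (j : ℝ))
              * t ^ ((n : ℝ) - m)) * c j
          else 0) = f j * g j := by
      intro j
      rw [hf_def, hg_def]; simp only
      by_cases hcond : 1 / t ≤ (2 : ℝ) ^ (2 * j)
      · rw [if_pos hcond, if_pos hcond, if_pos hcond, ← mul_assoc,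
          ← ENNReal.ofReal_mul (by positivity)]
        congr 2
        rw [show ((2:ℝ)^(-(b * (j:ℝ))) * t^(-(b/2))) * ((2:ℝ)^((2*σ+b)*(j:ℝ)) * t^(σ+b/2))
            = ((2:ℝ)^(-(b*(j:ℝ))) * (2:ℝ)^((2*σ+b)*(j:ℝ))) * (t^(-(b/2)) * t^(σ+b/2)) by ring,
          ← Real.rpow_add two_pos, ← Real.rpow_add ht]
        rw [hσ_def]
        congr 1
        · congr 1; ring
        · congr 1; ring
      · rw [if_neg hcond, if_neg hcond, if_neg hcond, zero_mul]
    rw [tsum_congr hfg]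
    refine le_trans (tsum_holder_pow hq f g) ?_
    have h1 : (∑' j : ℤ, f j ^ (q / (q - 1))) ≤ A := by
      have hfr : ∀ j : ℤ, f j ^ (q / (q - 1))
          = (if 1 / t ≤ (2 : ℝ) ^ (2 * j)
              then ENNReal.ofReal ((2 : ℝ) ^ (-(β * (j : ℝ))) * t ^ (-(β / 2))) else 0) := by
        intro j
        rw [hf_def]; simp only
        by_cases hcond : 1 / t ≤ (2 : ℝ) ^ (2 * j)
        · rw [if_pos hcond, if_pos hcond,
            ENNReal.ofReal_rpow_of_nonneg (by positivity) hr.le,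
            Real.mul_rpow (Real.rpow_nonneg (by norm_num) _) (Real.rpow_nonneg ht.le _),
            ← Real.rpow_mul (by norm_num : (0:ℝ) ≤ 2), ← Real.rpow_mul ht.le]
          rw [hβ_def]
          congr 2
          · ring
          · ring
        · rw [if_neg hcond, if_neg hcond, ENNReal.zero_rpow_of_pos hr]
      rw [tsum_congr hfr, hA_def]
      exact geom_bound hβ ht
    have h2 : ∀ j : ℤ, g j ^ q = U j t := by
      intro j
      rw [hg_def, hU_def]; simp only
      by_cases hcond : 1 / t ≤ (2 : ℝ) ^ (2 * j)
      · rw [if_pos hcond, if_pos hcond, ENNReal.mul_rpow_of_nonneg _ _ hq0.le,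
          ENNReal.ofReal_rpow_of_nonneg (by positivity) hq0.le,
          Real.mul_rpow (Real.rpow_nonneg (by norm_num) _) (Real.rpow_nonneg ht.le _),
          ← Real.rpow_mul (by norm_num : (0:ℝ) ≤ 2), ← Real.rpow_mul ht.le]
        congr 3
        · ring
        · rw [hp_def]; ring
      · rw [if_neg hcond, if_neg hcond, ENNReal.zero_rpow_of_pos hq0, zero_mul]
    rw [tsum_congr h2]
    exact mul_le_mul_left (ENNReal.rpow_le_rpow h1 hq1) _
  -- measurability of the indicator part
  have hitemeas : ∀ j : ℤ, Measurable fun t : ℝ => (if 1 / t ≤ (2 : ℝ) ^ (2 * j)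
      then ENNReal.ofReal ((2:ℝ) ^ ((2*σ + b) * q * (j:ℝ)) * t ^ p) else 0) := by
    intro j
    have hS : MeasurableSet {t : ℝ | 1/t ≤ (2:ℝ)^(2*j)} :=
      measurableSet_le (measurable_one.div measurable_id) measurable_const
    have heq : (fun t : ℝ => (if 1 / t ≤ (2 : ℝ) ^ (2 * j)
        then ENNReal.ofReal ((2:ℝ) ^ ((2*σ + b) * q * (j:ℝ)) * t ^ p) else 0))
        = Set.indicator {t : ℝ | 1/t ≤ (2:ℝ)^(2*j)}
            (fun t => ENNReal.ofReal ((2:ℝ) ^ ((2*σ + b) * q * (j:ℝ)) * t ^ p)) := by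
      ext t; rw [Set.indicator_apply]; rfl
    rw [heq]
    exact Measurable.indicator (by measurability) hS
  have hUmeas : ∀ j : ℤ, AEMeasurable (U j) (volume.restrict (Set.Ioi (0:ℝ))) := by
    intro j
    rw [hU_def]; simp only
    exact ((hitemeas j).mul_const _).aemeasurable
  -- per-j integral evaluation
  have hper : ∀ j : ℤ, (∫⁻ t in Set.Ioi (0:ℝ), U j t)
      = D * (ENNReal.ofReal ((2 : ℝ) ^ (-2 * j : ℤ)) * c j ^ q) := by
    intro j
    have hz : (0:ℝ) < (2 : ℝ) ^ (2 * j) := zpow_pos two_pos _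
    have hK : (0:ℝ) ≤ (2:ℝ) ^ ((2*σ + b) * q * (j:ℝ)) := Real.rpow_nonneg (by norm_num) _
    rw [hU_def]; simp only
    rw [lintegral_mul_const'' _ ((hitemeas j).aemeasurable)]
    have hsplit : ∀ t : ℝ, (if 1 / t ≤ (2 : ℝ) ^ (2 * j)
        then ENNReal.ofReal ((2:ℝ) ^ ((2*σ + b) * q * (j:ℝ)) * t ^ p) else 0)
        = ENNReal.ofReal ((2:ℝ) ^ ((2*σ + b) * q * (j:ℝ)))
            * (if 1 / t ≤ (2 : ℝ) ^ (2 * j) then ENNReal.ofReal (t ^ p) else 0) := by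
      intro t
      by_cases hcond : 1 / t ≤ (2 : ℝ) ^ (2 * j)
      · rw [if_pos hcond, if_pos hcond, ENNReal.ofReal_mul hK]
      · rw [if_neg hcond, if_neg hcond, mul_zero]
    rw [lintegral_congr hsplit, lintegral_const_mul' _ _ ENNReal.ofReal_ne_top,
      lint_tail hp hz]
    -- now pure arithmetic
    have hinv : ((2:ℝ)^(2*j))⁻¹ = (2:ℝ)^(-(2*(j:ℝ))) := by
      rw [← Real.rpow_intCast (2:ℝ) (2*j), ← Real.rpow_neg (by norm_num : (0:ℝ) ≤ 2)]
      congr 1; push_cast; ring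
    have hpow : (((2:ℝ)^(2*j))⁻¹)^(p+1) = (2:ℝ)^(-(2*(j:ℝ))*(p+1)) := by
      rw [hinv, ← Real.rpow_mul (by norm_num : (0:ℝ) ≤ 2)]
    have hprod : (2:ℝ) ^ ((2*σ + b) * q * (j:ℝ)) * (2:ℝ)^(-(2*(j:ℝ))*(p+1))
        = (2:ℝ)^(-2*j : ℤ) := by
      rw [← Real.rpow_add two_pos, ← Real.rpow_intCast]
      congr 1; push_cast; rw [hp_def, hσ_def]; ring
    have hreal : (2:ℝ) ^ ((2*σ + b) * q * (j:ℝ)) * (-(((2:ℝ)^(2*j))⁻¹)^(p+1)/(p+1))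
        = (-1/(p+1)) * (2:ℝ)^(-2*j : ℤ) := by
      rw [show (2:ℝ) ^ ((2*σ + b) * q * (j:ℝ)) * (-(((2:ℝ)^(2*j))⁻¹)^(p+1)/(p+1))
          = (-1/(p+1)) * ((2:ℝ) ^ ((2*σ + b) * q * (j:ℝ)) * (((2:ℝ)^(2*j))⁻¹)^(p+1)) by ring,
        hpow, hprod]
    rw [← ENNReal.ofReal_mul hK, hreal, ENNReal.ofReal_mul hD_nonneg.le, hD_def, mul_assoc]
  calc (∫⁻ t in Set.Ioi (0 : ℝ),
          (∑' j : ℤ, if 1 / t ≤ (2 : ℝ) ^ (2 * j)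
              then ENNReal.ofReal ((2 : ℝ) ^ ((2 * (n : ℝ) - 2 * m) * (j : ℝ))
                  * t ^ ((n : ℝ) - m)) * c j
              else 0) ^ q)
      ≤ ∫⁻ t in Set.Ioi (0:ℝ), A ^ (q - 1) * ∑' j : ℤ, U j t :=
        lintegral_mono_ae ((ae_restrict_iff' measurableSet_Ioi).mpr (ae_of_all _ hpoint))
    _ = A ^ (q - 1) * ∫⁻ t in Set.Ioi (0:ℝ), ∑' j : ℤ, U j t :=
        lintegral_const_mul' _ _ (ENNReal.rpow_ne_top_of_nonneg hq1 hA_ne_top)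
    _ = A ^ (q - 1) * ∑' j : ℤ, ∫⁻ t in Set.Ioi (0:ℝ), U j t := by
        rw [lintegral_tsum hUmeas]
    _ = A ^ (q - 1) * ∑' j : ℤ, D * (ENNReal.ofReal ((2 : ℝ) ^ (-2 * j : ℤ)) * c j ^ q) := by
        rw [tsum_congr hper]
    _ = A ^ (q - 1) * (D * ∑' j : ℤ, ENNReal.ofReal ((2 : ℝ) ^ (-2 * j : ℤ)) * c j ^ q) := by
        rw [ENNReal.tsum_mul_left]
    _ = A ^ (q - 1) * D * ∑' j : ℤ, ENNReal.ofReal ((2 : ℝ) ^ (-2 * j : ℤ)) * c j ^ q := by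
        rw [mul_assoc]
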